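/- (Theorem 3, ARE ≥ 1.) Fix an integer k ≥ 1, a time t > 0, and CDFs F_[1],…,F_[k] of nonnegative random variables with F_[r](t) > 0 for every r, and set F = (1/k) Σ_{r=1}^{k} F_[r]. Define K(t) = (∫₀ᵗ F(x)dx)/F(t), σ²(t) = (2∫₀ᵗ(t−x)F(x)dx)/F(t) − K(t)², and for each r, K_[r](t) = (∫₀ᵗ F_[r](x)dx)/F_[r](t) and σ²_[r](t) = (2∫₀ᵗ(t−x)F_[r](x)dx)/F_[r](t) − K_[r](t)². Let σ²_SRS(t) = σ²(t)/F(t) and σ²_RSS(t) = (1/(k F(t)²)) Σ_{r=1}^{k} [ σ²_[r](t) F_[r](t) + F_[r](t)(1 − F_[r](t))(K_[r](t) − K(t))² ]. Then σ²_SRS(t) ≥ σ²_RSS(t), i.e., the asymptotic relative efficiency ARE(t) = σ²_SRS(t)/σ²_RSS(t) satisfies ARE(t) ≥ 1. -/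

import Mathlib

open MeasureTheory ProbabilityTheory Finset

/-- (Theorem 3, ARE ≥ 1.)  Fix an integer `k ≥ 1`, a time `t > 0`, and CDFs
`F_[1], …, F_[k]` of nonnegative random variables with `F_[r] t > 0` for every `r`, and
set `F = (1/k) ∑_{r=1}^{k} F_[r]`.  Define `K t = (∫₀ᵗ F)/(F t)`,
`σ² t = (2∫₀ᵗ (t-x) F x dx)/(F t) - (K t)²`, and for each `r`,
`K_[r] t = (∫₀ᵗ F_[r])/(F_[r] t)` and
`σ²_[r] t = (2∫₀ᵗ (t-x) F_[r] x dx)/(F_[r] t) - (K_[r] t)²`.  Let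
`σ²_SRS t = σ² t / F t` and
`σ²_RSS t = (1/(k (F t)²)) ∑_{r=1}^{k} [σ²_[r] t F_[r] t
  + F_[r] t (1 - F_[r] t) (K_[r] t - K t)²]`.  Then `σ²_SRS t ≥ σ²_RSS t`, i.e. the
asymptotic relative efficiency `ARE t = σ²_SRS t / σ²_RSS t` satisfies `ARE t ≥ 1`. -/
theorem asymptotic_relative_efficiency_ge_one
    (k : ℕ) (hk : 1 ≤ k) (t : ℝ) (ht : 0 < t)
    (μ : ℕ → Measure ℝ) [∀ r, IsProbabilityMeasure (μ r)]
    (hμnn : ∀ r ∈ Finset.Icc 1 k, μ r (Set.Iio 0) = 0)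
    (Fr : ℕ → ℝ → ℝ) (hFr : ∀ r ∈ Finset.Icc 1 k, ∀ x, Fr r x = ProbabilityTheory.cdf (μ r) x)
    (hFrt : ∀ r ∈ Finset.Icc 1 k, 0 < Fr r t)
    (F : ℝ → ℝ) (hF : ∀ x, F x = (1 / (k : ℝ)) * ∑ r ∈ Finset.Icc 1 k, Fr r x)
    (K σ2 : ℝ) (Kr σ2r : ℕ → ℝ)
    (hK : K = (∫ x in (0:ℝ)..t, F x) / F t)
    (hσ2 : σ2 = (2 * ∫ x in (0:ℝ)..t, (t - x) * F x) / F t - K ^ 2)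
    (hKr : ∀ r ∈ Finset.Icc 1 k, Kr r = (∫ x in (0:ℝ)..t, Fr r x) / Fr r t)
    (hσ2r : ∀ r ∈ Finset.Icc 1 k,
      σ2r r = (2 * ∫ x in (0:ℝ)..t, (t - x) * Fr r x) / Fr r t - (Kr r) ^ 2)
    (σ2SRS σ2RSS : ℝ)
    (hσ2SRS : σ2SRS = σ2 / F t)
    (hσ2RSS : σ2RSS = (1 / ((k : ℝ) * F t ^ 2)) *
      ∑ r ∈ Finset.Icc 1 k,
        (σ2r r * Fr r t + Fr r t * (1 - Fr r t) * (Kr r - K) ^ 2)) :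
    σ2SRS ≥ σ2RSS := by
  have hkR : (0:ℝ) < (k:ℝ) := by exact_mod_cast Nat.lt_of_lt_of_le Nat.zero_lt_one hk
  have hkne : (k:ℝ) ≠ 0 := ne_of_gt hkR
  have hne : (Finset.Icc 1 k).Nonempty := ⟨1, by simp [hk]⟩
  -- abbreviations
  set A : ℝ := F t with hA
  set a : ℕ → ℝ := fun r => Fr r t with ha
  -- positivity of A
  have hApos : 0 < A := by
    rw [hA, hF t]
    have : 0 < ∑ r ∈ Finset.Icc 1 k, a r :=
      Finset.sum_pos (fun r hr => hFrt r hr) hne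
    positivity
  have hAne : A ≠ 0 := ne_of_gt hApos
  -- integrability of each Fr r on [0,t]
  have hIint : ∀ r ∈ Finset.Icc 1 k, IntervalIntegrable (Fr r) volume 0 t := by
    intro r hr
    have : Fr r = fun x => cdf (μ r) x := funext (hFr r hr)
    rw [this]
    exact (ProbabilityTheory.monotone_cdf (μ r)).intervalIntegrable
  have hJintr : ∀ r ∈ Finset.Icc 1 k,
      IntervalIntegrable (fun x => (t - x) * Fr r x) volume 0 t := by
    intro r hr
    exact (hIint r hr).continuousOn_mul (by fun_prop)
  -- the integrals of F decompose as averages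
  have hFsum : (∫ x in (0:ℝ)..t, F x)
      = (1 / (k:ℝ)) * ∑ r ∈ Finset.Icc 1 k, ∫ x in (0:ℝ)..t, Fr r x := by
    simp only [hF]
    rw [intervalIntegral.integral_const_mul, intervalIntegral.integral_finset_sum hIint]
  have hJsum : (∫ x in (0:ℝ)..t, (t - x) * F x)
      = (1 / (k:ℝ)) * ∑ r ∈ Finset.Icc 1 k, ∫ x in (0:ℝ)..t, (t - x) * Fr r x := by
    have h1 : (∫ x in (0:ℝ)..t, (t - x) * F x)
        = ∫ x in (0:ℝ)..t, (1 / (k:ℝ)) * ∑ r ∈ Finset.Icc 1 k, (t - x) * Fr r x := by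
      apply intervalIntegral.integral_congr
      intro x _
      simp only [hF, Finset.mul_sum]
      exact Finset.sum_congr rfl fun r _ => by ring
    rw [h1, intervalIntegral.integral_const_mul,
      intervalIntegral.integral_finset_sum hJintr]
  -- key sums
  have hS1 : ∑ r ∈ Finset.Icc 1 k, a r = (k:ℝ) * A := by
    rw [hA, hF t]; field_simp
    rfl
  have haI : ∀ r ∈ Finset.Icc 1 k, a r * Kr r = ∫ x in (0:ℝ)..t, Fr r x := by
    intro r hr
    rw [hKr r hr]
    field_simp [ne_of_gt (hFrt r hr)]
    exact mul_comm _ _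
  have hS2 : ∑ r ∈ Finset.Icc 1 k, a r * Kr r = (k:ℝ) * A * K := by
    rw [Finset.sum_congr rfl haI]
    have : (∫ x in (0:ℝ)..t, F x) = K * A := by rw [hK]; field_simp
    have h2 := hFsum
    rw [this] at h2
    field_simp at h2
    linarith [h2]
  -- per-term identity for σ2r
  have hterm : ∀ r ∈ Finset.Icc 1 k,
      σ2r r * a r + a r * (1 - a r) * (Kr r - K) ^ 2
        = 2 * (∫ x in (0:ℝ)..t, (t - x) * Fr r x)
          - (a r)^2 * (Kr r - K)^2 - 2 * K * (a r * Kr r) + K^2 * a r := by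
    intro r hr
    have h := hσ2r r hr
    have hane : a r ≠ 0 := ne_of_gt (hFrt r hr)
    rw [h]
    simp only [ha]
    have hane' : Fr r t ≠ 0 := ne_of_gt (hFrt r hr)
    field_simp
    ring
  -- rewrite the RSS sum
  have hsum : ∑ r ∈ Finset.Icc 1 k,
      (σ2r r * a r + a r * (1 - a r) * (Kr r - K) ^ 2)
      = 2 * (∑ r ∈ Finset.Icc 1 k, ∫ x in (0:ℝ)..t, (t - x) * Fr r x)
        - (∑ r ∈ Finset.Icc 1 k, (a r)^2 * (Kr r - K)^2)
        - (k:ℝ) * A * K^2 := by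
    rw [Finset.sum_congr rfl hterm]
    rw [show ∀ (f g h i : ℕ → ℝ), (∑ r ∈ Finset.Icc 1 k, (f r - g r - h r + i r))
        = (∑ r ∈ Finset.Icc 1 k, f r) - (∑ r ∈ Finset.Icc 1 k, g r)
          - (∑ r ∈ Finset.Icc 1 k, h r) + (∑ r ∈ Finset.Icc 1 k, i r) from
      fun f g h i => by rw [Finset.sum_add_distrib, Finset.sum_sub_distrib,
        Finset.sum_sub_distrib]]
    rw [← Finset.mul_sum, ← Finset.mul_sum, ← Finset.mul_sum, hS1, hS2]
    ring
  -- the main identity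
  have hQ : 0 ≤ ∑ r ∈ Finset.Icc 1 k, (a r)^2 * (Kr r - K)^2 :=
    Finset.sum_nonneg fun r _ => by positivity
  have hmain : (k:ℝ) * A^2 * (σ2SRS - σ2RSS)
      = ∑ r ∈ Finset.Icc 1 k, (a r)^2 * (Kr r - K)^2 := by
    rw [hσ2SRS, hσ2, hσ2RSS, hsum, hJsum]
    field_simp
    ring
  have hpos : 0 < (k:ℝ) * A^2 := by positivity
  nlinarith [hmain, hQ, hpos]
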